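/- Let p ∈ (0,1) and N ≥ 1, and let P_N(x) = ((−1)^N / √(2N+1)) · ∑_{n=0}^N C(N,n) C(N+n,n) (−x)^n be the normalized shifted Legendre polynomial. Then ∫_0^1 P_N(x) dμ_p(x) = ((p−1)^N / (√(2N+1) · ∏_{n=1}^N (2^n − 1))) · det B_N(p; c_0, …, c_N), where c_j = (−1)^j C(N,j) C(N+j,j) for 0 ≤ j ≤ N. -/

import Mathlib

open MeasureTheory

/-- The probability measure on `{0,1}` (encoded as `Bool`, `false` ↔ digit `0`,
`true` ↔ digit `1`) giving mass `p` to the digit `0` and mass `1 - p` to the digit `1`. -/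
noncomputable def bernoulliBool (p : ℝ) : Measure Bool :=
  ENNReal.ofReal p • Measure.dirac false + ENNReal.ofReal (1 - p) • Measure.dirac true

/-- `ν` is the infinite product, over `n ≥ 1` (indexed here by `ℕ`, where index `n`
stands for the digit `n+1`), of the Bernoulli measures `bernoulliBool p`:
it is characterized as the projective limit of the finite product measures. -/
def IsBernoulliProduct (p : ℝ) (ν : Measure (ℕ → Bool)) : Prop :=
  IsProjectiveLimit ν fun J : Finset ℕ => Measure.pi fun _ : J => bernoulliBool p

/-- The binary expansion map sending a 0-1 sequence `(x_n)_{n ≥ 1}` to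
`∑_{n=1}^∞ x_n 2^{-n}` (index `n : ℕ` stands for the digit `n+1`). -/
noncomputable def binExpand (x : ℕ → Bool) : ℝ :=
  ∑' n : ℕ, if x n then ((2 : ℝ) ^ (n + 1))⁻¹ else 0

/-- `μ` is the Bernoulli measure `μ_p` on `ℝ`: the pushforward under the binary
expansion map of the infinite product of Bernoulli measures on `{0,1}`. -/
def IsBernoulliMeasure (p : ℝ) (μ : Measure ℝ) : Prop :=
  ∃ ν : Measure (ℕ → Bool), IsBernoulliProduct p ν ∧ μ = ν.map binExpand

/-- The `(N+1) × (N+1)` complex Hessenberg matrix `B_N(p; c_0, …, c_N)` (1-indexed in the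
paper, 0-indexed here): for `0 ≤ i < N` the row `i` (paper row `i+1`) has entries
`C(i+1, j)` for `j ≤ i`, the entry `(1 - 2^{i+1})/(1-p)` at column `j = i+1`, and `0`
for `j > i+1`; the last row (row `N`) is `(c_0, c_1, …, c_N)`. -/
noncomputable def Bmat (N : ℕ) (p : ℝ) (c : Fin (N + 1) → ℂ) :
    Matrix (Fin (N + 1)) (Fin (N + 1)) ℂ := fun i j =>
  if (i : ℕ) < N then
    if (j : ℕ) ≤ (i : ℕ) then (Nat.choose ((i : ℕ) + 1) (j : ℕ) : ℂ)
    else if (j : ℕ) = (i : ℕ) + 1 then (1 - 2 ^ ((i : ℕ) + 1)) / (1 - (p : ℂ))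
    else 0
  else c j

open MeasureTheory
open scoped ENNReal

variable {p : ℝ}

/-- weight -/
noncomputable def wB (p : ℝ) : Bool → ℝ≥0∞ := fun b => if b then ENNReal.ofReal (1 - p) else ENNReal.ofReal p

lemma bernoulliBool_singleton (p : ℝ) (b : Bool) : bernoulliBool p {b} = wB p b := by
  cases b <;>
  simp [bernoulliBool, wB, Measure.dirac_apply' _ (measurableSet_singleton _)]

instance bernoulliBool_finite (p : ℝ) : IsFiniteMeasure (bernoulliBool p) := by
  constructor
  simp only [bernoulliBool, Measure.add_apply, Measure.smul_apply, smul_eq_mul]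
  exact ENNReal.add_lt_top.mpr ⟨ENNReal.mul_lt_top ENNReal.ofReal_lt_top (by simp),
    ENNReal.mul_lt_top ENNReal.ofReal_lt_top (by simp)⟩

lemma bernoulliBool_probability (hp : p ∈ Set.Ioo (0:ℝ) 1) :
    IsProbabilityMeasure (bernoulliBool p) := by
  constructor
  simp only [bernoulliBool, Measure.add_apply, Measure.smul_apply, smul_eq_mul,
    Measure.dirac_apply' _ MeasurableSet.univ]
  rw [Set.indicator_of_mem (Set.mem_univ _), Set.indicator_of_mem (Set.mem_univ _)]
  simp only [Pi.one_apply, mul_one]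
  rw [← ENNReal.ofReal_add hp.1.le (by linarith [hp.2])]
  norm_num

/-- point cylinder measurable -/
lemma measurableSet_pointCyl (J : Finset ℕ) (y : ℕ → Bool) :
    MeasurableSet {x : ℕ → Bool | ∀ j ∈ J, x j = y j} := by
  have : {x : ℕ → Bool | ∀ j ∈ J, x j = y j} = ⋂ j ∈ J, (fun x : ℕ → Bool => x j) ⁻¹' {y j} := by
    ext x; simp
  rw [this]
  exact MeasurableSet.biInter (J.countable_toSet) fun j _ =>
    (measurable_pi_apply j) (measurableSet_singleton _)

lemma pointCyl_measure {ν : Measure (ℕ → Bool)} (hν : IsBernoulliProduct p ν)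
    (J : Finset ℕ) (y : ℕ → Bool) :
    ν {x : ℕ → Bool | ∀ j ∈ J, x j = y j} = ∏ j ∈ J, wB p (y j) := by
  have hJ := hν J
  set y' : ∀ j : J, Bool := J.restrict y with hy'
  have hmeas : MeasurableSet ({y'} : Set (∀ j : J, Bool)) := measurableSet_singleton _
  have hpre : (J.restrict (π := fun _ => Bool)) ⁻¹' {J.restrict y} = {x : ℕ → Bool | ∀ j ∈ J, x j = y j} := by
    ext x
    simp only [Set.mem_preimage, Set.mem_singleton_iff, Set.mem_setOf_eq]
    constructor
    · intro h j hj
      exact congrFun h ⟨j, hj⟩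
    · intro h
      funext j
      exact h j j.2
  have := Measure.map_apply (J.measurable_restrict) hmeas (μ := ν)
  rw [hJ] at this
  rw [← hpre, ← this]
  have hsing : ({y'} : Set (∀ j : J, Bool)) = Set.univ.pi (fun j => {y' j}) := by
    ext z; simp [funext_iff]
  rw [hsing, Measure.pi_pi]
  simp only [bernoulliBool_singleton]
  rw [← Finset.prod_coe_sort J (fun j => wB p (y j))]
  rfl

def shiftB (x : ℕ → Bool) : ℕ → Bool := fun n => x (n + 1)

lemma measurable_shiftB : Measurable shiftB :=
  measurable_pi_lambda _ fun n => measurable_pi_apply (n + 1)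

def Cyl : Set (Set (ℕ → Bool)) :=
  {s | ∃ (J : Finset ℕ) (y : ℕ → Bool), s = {x | ∀ j ∈ J, x j = y j}}

lemma isPiSystem_Cyl : IsPiSystem Cyl := by
  rintro s ⟨J, y, rfl⟩ t ⟨K, z, rfl⟩ hne
  obtain ⟨x₀, hx₀s, hx₀t⟩ := hne
  refine ⟨J ∪ K, fun j => if j ∈ J then y j else z j, ?_⟩
  ext x
  simp only [Set.mem_inter_iff, Set.mem_setOf_eq, Finset.mem_union]
  constructor
  · rintro ⟨h1, h2⟩ j hj
    by_cases hjJ : j ∈ J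
    · simp [hjJ, h1 j hjJ]
    · simp only [hjJ, if_false]
      exact h2 j (hj.resolve_left hjJ)
  · intro h
    constructor
    · intro j hj
      have := h j (Or.inl hj)
      simpa [hj] using this
    · intro j hj
      have := h j (Or.inr hj)
      by_cases hjJ : j ∈ J
      · simp only [hjJ, if_true] at this
        have e1 : x₀ j = y j := hx₀s j hjJ
        have e2 : x₀ j = z j := hx₀t j hj
        rw [this, ← e1, e2]
      · simpa [hjJ] using this

lemma generateFrom_Cyl :
    (inferInstance : MeasurableSpace (ℕ → Bool)) = MeasurableSpace.generateFrom Cyl := by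
  refine le_antisymm ?_ (MeasurableSpace.generateFrom_le ?_)
  · rw [show (inferInstance : MeasurableSpace (ℕ → Bool)) = MeasurableSpace.pi from rfl,
      MeasurableSpace.pi]
    refine iSup_le fun n => ?_
    rw [MeasurableSpace.comap_le_iff_le_map]
    intro t ht
    rw [MeasurableSpace.map_def] at *
    have hb : ∀ b : Bool, MeasurableSet[MeasurableSpace.generateFrom Cyl]
        ((fun x : ℕ → Bool => x n) ⁻¹' {b}) := by
      intro b
      refine MeasurableSpace.measurableSet_generateFrom ⟨{n}, fun _ => b, ?_⟩
      ext x; simp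
    have : (fun x : ℕ → Bool => x n) ⁻¹' t = ⋃ b ∈ t, (fun x : ℕ → Bool => x n) ⁻¹' {b} := by
      ext x; simp
    rw [this]
    exact MeasurableSet.biUnion (Set.to_countable _) fun b _ => hb b
  · rintro s ⟨J, y, rfl⟩
    exact measurableSet_pointCyl J y

lemma measurableSet_digit (n : ℕ) (b : Bool) :
    MeasurableSet {x : ℕ → Bool | x n = b} :=
  (measurable_pi_apply n) (measurableSet_singleton _)

lemma shift_restrict {p : ℝ} (hp : p ∈ Set.Ioo (0:ℝ) 1) {ν : Measure (ℕ → Bool)}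
    (hν : IsBernoulliProduct p ν) (b : Bool) :
    Measure.map shiftB (ν.restrict {x | x 0 = b}) = wB p b • ν := by
  haveI := bernoulliBool_probability hp
  haveI : IsProbabilityMeasure ν := hν.isProbabilityMeasure
  haveI : IsFiniteMeasure (Measure.map shiftB (ν.restrict {x | x 0 = b})) := by
    constructor
    rw [Measure.map_apply measurable_shiftB MeasurableSet.univ]
    exact lt_of_le_of_lt (le_trans (measure_mono (Set.subset_univ _))
      (Measure.restrict_le_self _)) (measure_lt_top ν _)
  refine MeasureTheory.ext_of_generate_finite Cyl generateFrom_Cyl isPiSystem_Cyl ?_ ?_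
  · rintro s ⟨J, y, rfl⟩
    rw [Measure.map_apply measurable_shiftB (measurableSet_pointCyl J y),
      Measure.restrict_apply (measurable_shiftB (measurableSet_pointCyl J y))]
    have hset : shiftB ⁻¹' {x | ∀ j ∈ J, x j = y j} ∩ {x | x 0 = b}
        = {x | ∀ j ∈ insert 0 (J.image Nat.succ),
            x j = (fun j => if j = 0 then b else y (j - 1)) j} := by
      ext x
      simp only [Set.mem_inter_iff, Set.mem_preimage, Set.mem_setOf_eq, Finset.mem_insert,
        Finset.mem_image, shiftB]
      constructor
      · rintro ⟨h1, h2⟩ j hj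
        rcases hj with rfl | ⟨k, hk, rfl⟩
        · simpa using h2
        · simpa using h1 k hk
      · intro h
        constructor
        · intro j hj
          have := h (j + 1) (Or.inr ⟨j, hj, rfl⟩)
          simpa using this
        · simpa using h 0 (Or.inl rfl)
    rw [hset, pointCyl_measure hν]
    simp only [Measure.smul_apply, smul_eq_mul]
    rw [pointCyl_measure hν]
    have h0 : (0 : ℕ) ∉ J.image Nat.succ := by simp
    rw [Finset.prod_insert h0, Finset.prod_image (fun a _ c _ h => Nat.succ_injective h)]
    simp only [Nat.succ_eq_add_one]
    norm_num
  · rw [Measure.map_apply measurable_shiftB MeasurableSet.univ, Set.preimage_univ,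
      Measure.restrict_apply MeasurableSet.univ, Set.univ_inter]
    have : {x : ℕ → Bool | x 0 = b} = {x | ∀ j ∈ ({0} : Finset ℕ), x j = b} := by
      ext x; simp
    rw [this, pointCyl_measure hν (y := fun _ => b)]
    simp [measure_univ]

lemma geom_term_aux (n : ℕ) : (1:ℝ)/2 * (1/2)^n = ((2:ℝ)^(n+1))⁻¹ := by
  rw [one_div, inv_pow, pow_succ, mul_inv]
  exact mul_comm _ _

lemma geom_summable_aux : Summable (fun n : ℕ => ((2 : ℝ)^(n+1))⁻¹) :=
  (summable_geometric_two.mul_left (1/2)).congr geom_term_aux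

lemma geom_sum_aux : ∑' n : ℕ, ((2:ℝ)^(n+1))⁻¹ = 1 := by
  have h := tsum_geometric_two' 1
  rw [← h]
  exact tsum_congr fun n => by
    rw [one_div, pow_succ, mul_inv, div_eq_mul_inv]
    exact mul_comm _ _

lemma summable_binExpand (x : ℕ → Bool) :
    Summable (fun n => if x n then ((2 : ℝ) ^ (n + 1))⁻¹ else 0) := by
  refine Summable.of_nonneg_of_le (fun n => by positivity) (fun n => ?_) geom_summable_aux
  split
  · exact le_refl _
  · positivity

lemma binExpand_nonneg (x : ℕ → Bool) : 0 ≤ binExpand x :=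
  tsum_nonneg fun n => by positivity

lemma binExpand_le_one (x : ℕ → Bool) : binExpand x ≤ 1 := by
  have h1 : binExpand x ≤ ∑' n : ℕ, ((2:ℝ) ^ (n+1))⁻¹ := by
    refine Summable.tsum_le_tsum (fun n => ?_) (summable_binExpand x) geom_summable_aux
    split
    · exact le_refl _
    · positivity
  rw [geom_sum_aux] at h1
  exact h1

lemma binExpand_mem_Icc (x : ℕ → Bool) : binExpand x ∈ Set.Icc (0:ℝ) 1 :=
  ⟨binExpand_nonneg x, binExpand_le_one x⟩

lemma measurable_binExpand : Measurable binExpand := by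
  have hterm : ∀ n : ℕ, Measurable (fun x : ℕ → Bool =>
      if x n then ((2 : ℝ) ^ (n + 1))⁻¹ else 0) := fun n =>
    Measurable.ite (measurableSet_digit n true) measurable_const measurable_const
  have : ∀ x : ℕ → Bool, Filter.Tendsto
      (fun N => ∑ n ∈ Finset.range N, if x n then ((2 : ℝ) ^ (n + 1))⁻¹ else 0)
      Filter.atTop (nhds (binExpand x)) :=
    fun x => (summable_binExpand x).hasSum.tendsto_sum_nat
  exact measurable_of_tendsto_metrizable (fun N => Finset.measurable_sum _ fun n _ => hterm n)
    (tendsto_pi_nhds.mpr this)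

lemma binExpand_succ (x : ℕ → Bool) :
    binExpand x = (if x 0 then (1:ℝ)/2 else 0) + binExpand (shiftB x) / 2 := by
  rw [binExpand, Summable.tsum_eq_zero_add (summable_binExpand x)]
  congr 1
  · split <;> norm_num
  · simp only [binExpand, shiftB]
    rw [eq_div_iff (two_ne_zero (α := ℝ)), ← tsum_mul_right]
    refine tsum_congr fun n => ?_
    split_ifs
    · rw [pow_succ (2:ℝ) (n+1), mul_inv, mul_assoc, inv_mul_cancel₀ (two_ne_zero (α := ℝ)),
        mul_one]
      simp [*]
    · simp [*]

open scoped BigOperators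

noncomputable def momI (ν : Measure (ℕ → Bool)) (k : ℕ) : ℝ := ∫ x, (binExpand x) ^ k ∂ν

lemma integrable_comp_Icc {ν : Measure (ℕ → Bool)} [IsProbabilityMeasure ν]
    {g : ℝ → ℝ} (hg : Continuous g) {f : (ℕ → Bool) → ℝ} (hf : Measurable f)
    (hficc : ∀ x, f x ∈ Set.Icc (0:ℝ) 1) : Integrable (fun x => g (f x)) ν := by
  obtain ⟨C, hC⟩ := isCompact_Icc.exists_bound_of_continuousOn (f := g)
    (hg.continuousOn (s := Set.Icc (0:ℝ) 1))
  refine Integrable.mono' (integrable_const C) (hg.measurable.comp hf).aestronglyMeasurable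
    (Filter.Eventually.of_forall fun x => hC _ (hficc x))

lemma momI_zero {ν : Measure (ℕ → Bool)} [IsProbabilityMeasure ν] : momI ν 0 = 1 := by
  simp [momI]

lemma integrable_pow_binExpand {ν : Measure (ℕ → Bool)} [IsProbabilityMeasure ν] (k : ℕ) :
    Integrable (fun x => (binExpand x) ^ k) ν :=
  integrable_comp_Icc (continuous_pow k) measurable_binExpand binExpand_mem_Icc

lemma momI_rec {p : ℝ} (hp : p ∈ Set.Ioo (0:ℝ) 1) {ν : Measure (ℕ → Bool)}
    (hν : IsBernoulliProduct p ν) (k : ℕ) :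
    (2 ^ (k+1) - 1) * momI ν (k+1)
      = (1 - p) * ∑ j ∈ Finset.range (k+1), ((k+1).choose j : ℝ) * momI ν j := by
  haveI := bernoulliBool_probability hp
  haveI : IsProbabilityMeasure ν := hν.isProbabilityMeasure
  classical
  set inr : (ℕ → Bool) → ℝ := fun x => (if x 0 then (1:ℝ)/2 else 0) + binExpand (shiftB x)/2
    with hinr
  have hinr_meas : Measurable inr := by
    refine Measurable.add (Measurable.ite (measurableSet_digit 0 true)
      measurable_const measurable_const) ?_
    exact (measurable_binExpand.comp measurable_shiftB).div_const 2
  have hinr_icc : ∀ x, inr x ∈ Set.Icc (0:ℝ) 1 := by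
    intro x
    obtain ⟨h0, h1⟩ := binExpand_mem_Icc (shiftB x)
    simp only [hinr]
    split <;> constructor <;> simp <;> linarith
  set gb : Bool → ℝ → ℝ := fun b t => ((if b then (1:ℝ)/2 else 0) + t/2) ^ (k+1) with hgb
  have hgb_cont : ∀ b, Continuous (gb b) := fun b => by
    simp only [hgb]
    fun_prop
  -- step 1: rewrite the moment via binExpand_succ
  have step1 : momI ν (k+1) = ∫ x, (inr x) ^ (k+1) ∂ν := by
    unfold momI
    refine integral_congr_ae (Filter.Eventually.of_forall fun x => ?_)
    exact congrArg (· ^ (k+1)) (binExpand_succ x)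
  -- step 2: set integral identity for each b
  have step2 : ∀ b : Bool, ∫ x in {x : ℕ → Bool | x 0 = b}, (inr x) ^ (k+1) ∂ν
      = (wB p b).toReal * ∫ y, gb b (binExpand y) ∂ν := by
    intro b
    have heq : ∫ x in {x : ℕ → Bool | x 0 = b}, (inr x) ^ (k+1) ∂ν
        = ∫ x in {x : ℕ → Bool | x 0 = b}, gb b (binExpand (shiftB x)) ∂ν := by
      refine setIntegral_congr_fun (measurableSet_digit 0 b) (fun x hx => ?_)
      have hx0 : x 0 = b := hx
      simp only [hinr, hgb, hx0]
    rw [heq]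
    have hmeas2 : AEStronglyMeasurable (fun y => gb b (binExpand y))
        (Measure.map shiftB (ν.restrict {x : ℕ → Bool | x 0 = b})) :=
      ((hgb_cont b).measurable.comp measurable_binExpand).aestronglyMeasurable
    calc ∫ x in {x : ℕ → Bool | x 0 = b}, gb b (binExpand (shiftB x)) ∂ν
        = ∫ y, gb b (binExpand y) ∂(Measure.map shiftB (ν.restrict {x : ℕ → Bool | x 0 = b})) :=
          (integral_map measurable_shiftB.aemeasurable hmeas2).symm
      _ = ∫ y, gb b (binExpand y) ∂(wB p b • ν) := by rw [shift_restrict hp hν b]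
      _ = (wB p b).toReal * ∫ y, gb b (binExpand y) ∂ν := by
          rw [integral_smul_measure]; rfl
  -- step 3: split the integral
  have hccompl : {x : ℕ → Bool | x 0 = false}ᶜ = {x : ℕ → Bool | x 0 = true} := by
    ext x; simp
  have hint : Integrable (fun x => (inr x) ^ (k+1)) ν :=
    integrable_comp_Icc (continuous_pow (k+1)) hinr_meas hinr_icc
  have step3 : momI ν (k+1)
      = (wB p false).toReal * ∫ y, gb false (binExpand y) ∂ν
        + (wB p true).toReal * ∫ y, gb true (binExpand y) ∂ν := by
    rw [step1, ← integral_add_compl (measurableSet_digit 0 false) hint, hccompl,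
      step2 false, step2 true]
  -- step 4: identify the two integrals
  have hwf : (wB p false).toReal = p := by simp [wB, ENNReal.toReal_ofReal hp.1.le]
  have hwt : (wB p true).toReal = 1 - p := by
    simp [wB, ENNReal.toReal_ofReal (by linarith [hp.2] : (0:ℝ) ≤ 1 - p)]
  have hfalse : ∫ y, gb false (binExpand y) ∂ν = (1/2)^(k+1) * momI ν (k+1) := by
    unfold momI
    rw [← integral_const_mul]
    refine integral_congr_ae (Filter.Eventually.of_forall fun y => ?_)
    simp only [hgb, if_neg Bool.false_ne_true, zero_add, div_pow, div_eq_mul_inv, one_pow]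
    ring
  have htrue : ∫ y, gb true (binExpand y) ∂ν
      = (1/2)^(k+1) * ∑ j ∈ Finset.range (k+2), ((k+1).choose j : ℝ) * momI ν j := by
    have hexp : ∀ t : ℝ, gb true t
        = (1/2)^(k+1) * ∑ j ∈ Finset.range (k+2), ((k+1).choose j : ℝ) * t ^ j := by
      intro t
      simp only [hgb, if_pos rfl, if_true]
      have : (1:ℝ)/2 + t/2 = (t + 1)/2 := by ring
      rw [this, div_pow, add_pow, Finset.sum_div, Finset.mul_sum]
      refine Finset.sum_congr rfl fun m _ => ?_
      rw [one_pow, mul_one, one_div, inv_pow, div_eq_mul_inv]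
      ring
    unfold momI
    calc ∫ y, gb true (binExpand y) ∂ν
        = ∫ y, (1/2)^(k+1) * ∑ j ∈ Finset.range (k+2),
            ((k+1).choose j : ℝ) * (binExpand y) ^ j ∂ν := by
          exact integral_congr_ae (Filter.Eventually.of_forall fun y => hexp (binExpand y))
      _ = (1/2)^(k+1) * ∑ j ∈ Finset.range (k+2),
            ((k+1).choose j : ℝ) * ∫ y, (binExpand y) ^ j ∂ν := by
          rw [integral_const_mul]
          congr 1
          rw [integral_finset_sum _ (fun j _ => (integrable_pow_binExpand j).const_mul _)]
          exact Finset.sum_congr rfl fun j _ => integral_const_mul _ _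
  have hstep : momI ν (k+1) = p * ((1/2)^(k+1) * momI ν (k+1))
      + (1-p) * ((1/2)^(k+1) * (∑ j ∈ Finset.range (k+2), ((k+1).choose j : ℝ) * momI ν j)) := by
    rw [hwf, hwt, hfalse, htrue] at step3
    exact step3
  rw [Finset.sum_range_succ, Nat.choose_self] at hstep
  have h2 : (2:ℝ)^(k+1) * (1/2)^(k+1) = 1 := by
    rw [← mul_pow]; norm_num
  push_cast at hstep ⊢
  linear_combination (2:ℝ)^(k+1) * hstep
    + (momI ν (k+1) + (1-p) * ∑ j ∈ Finset.range (k+1), ((k+1).choose j : ℝ) * momI ν j) * h2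

open Matrix in
lemma det_Bmat (N : ℕ) (p : ℝ) (c : Fin (N+1) → ℂ) (m : Fin (N+1) → ℂ) (hm0 : m 0 = 1)
    (hrow : ∀ i : Fin (N+1), (i:ℕ) < N → ∑ j, Bmat N p c i j * m j = 0) :
    (Bmat N p c).det
      = (-1)^N * (∑ j, c j * m j) * ∏ i ∈ Finset.range N, ((1 - 2^(i+1))/(1-(p:ℂ))) := by
  classical
  set B := Bmat N p c with hB
  set M : Matrix (Fin (N+1)) (Fin (N+1)) ℂ :=
    (fun i j => if j = 0 then m i else if i = j then 1 else 0) with hM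
  have hMtri : M.BlockTriangular OrderDual.toDual := by
    intro i j hij
    have hij' : i < j := hij
    have hj0 : j ≠ 0 := by
      intro h
      subst h
      exact absurd hij' (by simp)
    simp [hM, hj0, ne_of_lt hij']
  have hMdet : M.det = 1 := by
    rw [Matrix.det_of_lowerTriangular M hMtri]
    rw [show (∏ i : Fin (N+1), M i i) = ∏ i : Fin (N+1), (if i = 0 then m i else 1) from
      Finset.prod_congr rfl fun i _ => by by_cases h : i = 0 <;> simp [hM, h]]
    rw [Finset.prod_ite_eq' Finset.univ (0 : Fin (N+1)) (fun i => m i)]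
    simp [hm0]
  have hBM0 : ∀ i : Fin (N+1), (B * M) i 0 = if i = Fin.last N then ∑ j, c j * m j else 0 := by
    intro i
    have h1 : (B * M) i 0 = ∑ j, B i j * m j := by
      rw [Matrix.mul_apply]; simp only [hM]
      exact Finset.sum_congr rfl fun j _ => by simp
    rw [h1]
    by_cases hi : (i : ℕ) < N
    · rw [hrow i hi, if_neg]
      intro h
      rw [h] at hi
      simp [Fin.last] at hi
    · have hi' : i = Fin.last N := by
        apply Fin.ext
        simp only [Fin.val_last]
        omega
      rw [if_pos hi', hi']
      refine Finset.sum_congr rfl fun j _ => ?_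
      have : B (Fin.last N) j = c j := by
        simp [hB, Bmat]
      rw [this]
  have hBMcol : ∀ (i : Fin (N+1)) (j : Fin (N+1)), j ≠ 0 → (B * M) i j = B i j := by
    intro i j hj
    rw [Matrix.mul_apply]
    simp only [hM, if_neg hj, mul_ite, mul_one, mul_zero,
      Finset.sum_ite_eq', Finset.mem_univ, if_true]
  have hgoal : (B * M).det
      = (-1)^N * (∑ j, c j * m j) * ∏ i ∈ Finset.range N, ((1 - 2^(i+1))/(1-(p:ℂ))) := by
    rw [Matrix.det_succ_column_zero]
    rw [Finset.sum_eq_single (Fin.last N)]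
    · rw [hBM0, if_pos rfl]
      have hsub : ∀ (i j : Fin N),
          ((B * M).submatrix (Fin.last N).succAbove Fin.succ) i j = B i.castSucc j.succ := by
        intro i j
        rw [Matrix.submatrix_apply, Fin.succAbove_last]
        exact hBMcol _ _ (Fin.succ_ne_zero j)
      have htri : ((B * M).submatrix (Fin.last N).succAbove Fin.succ).BlockTriangular
          OrderDual.toDual := by
        intro i j hij
        have hij' : i < j := hij
        rw [hsub]
        have h1 : ((i.castSucc : Fin (N+1)) : ℕ) < N := i.2
        have h2 : ¬ ((j.succ : Fin (N+1)) : ℕ) ≤ ((i.castSucc : Fin (N+1)) : ℕ) := by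
          simp only [Fin.val_succ, Fin.coe_castSucc]
          omega
        have h3 : ¬ ((j.succ : Fin (N+1)) : ℕ) = ((i.castSucc : Fin (N+1)) : ℕ) + 1 := by
          simp only [Fin.val_succ, Fin.coe_castSucc]
          have : (i:ℕ) < (j:ℕ) := hij'
          omega
        have hlt : (i:ℕ) < (j:ℕ) := hij'
        simp only [hB, Bmat, Fin.coe_castSucc, Fin.val_succ]
        rw [if_pos (i.2 : (i:ℕ) < N), if_neg (by omega : ¬((j:ℕ)+1 ≤ (i:ℕ))),
          if_neg (by omega : ¬((j:ℕ)+1 = (i:ℕ)+1))]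
      have hdiag : ∀ i : Fin N, ((B * M).submatrix (Fin.last N).succAbove Fin.succ) i i
          = (1 - 2^((i:ℕ)+1))/(1-(p:ℂ)) := by
        intro i
        rw [hsub]
        have h1 : ((i.castSucc : Fin (N+1)) : ℕ) < N := i.2
        have h2 : ¬ ((i.succ : Fin (N+1)) : ℕ) ≤ ((i.castSucc : Fin (N+1)) : ℕ) := by simp
        have h3 : ((i.succ : Fin (N+1)) : ℕ) = ((i.castSucc : Fin (N+1)) : ℕ) + 1 := by simp
        simp [hB, Bmat, h1, h2, h3]
      rw [Matrix.det_of_lowerTriangular _ htri]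
      rw [Finset.prod_congr rfl fun i _ => hdiag i]
      rw [Fin.prod_univ_eq_prod_range (fun i => (1 - 2^(i+1))/(1-(p:ℂ))) N, Fin.val_last]
    · intro i _ hi
      simp [hBM0, if_neg hi]
    · intro h
      exact absurd (Finset.mem_univ _) h
  calc B.det = B.det * M.det := by rw [hMdet, mul_one]
    _ = (B * M).det := (Matrix.det_mul _ _).symm
    _ = _ := hgoal

theorem stmt14_aux (p : ℝ) (hp : p ∈ Set.Ioo (0 : ℝ) 1) (μ : Measure ℝ)
    (hμ : IsBernoulliMeasure p μ) (N : ℕ) (hN : 1 ≤ N) :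
    ((∫ x in Set.Icc (0 : ℝ) 1,
        ((-1 : ℝ) ^ N / Real.sqrt (2 * N + 1)) *
          ∑ n ∈ Finset.range (N + 1),
            (N.choose n : ℝ) * ((N + n).choose n : ℝ) * (-x) ^ n ∂μ : ℝ) : ℂ) =
      ((p : ℂ) - 1) ^ N /
          ((Real.sqrt (2 * N + 1) : ℂ) * ∏ n ∈ Finset.range N, ((2 : ℂ) ^ (n + 1) - 1)) *
        (Bmat N p fun j =>
          (-1) ^ (j : ℕ) * (N.choose (j : ℕ) : ℂ) * ((N + (j : ℕ)).choose (j : ℕ) : ℂ)).det := by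
  classical
  obtain ⟨ν, hν, hμeq⟩ := hμ
  haveI := bernoulliBool_probability hp
  haveI hνprob : IsProbabilityMeasure ν := hν.isProbabilityMeasure
  haveI : IsProbabilityMeasure μ := by
    rw [hμeq]; exact Measure.isProbabilityMeasure_map measurable_binExpand.aemeasurable
  set c : Fin (N+1) → ℂ := fun j =>
    (-1) ^ (j : ℕ) * (N.choose (j : ℕ) : ℂ) * ((N + (j : ℕ)).choose (j : ℕ) : ℂ) with hc
  set m : Fin (N+1) → ℂ := fun j => ((momI ν (j : ℕ) : ℝ) : ℂ) with hm
  have hp1 : (1 : ℝ) - p ≠ 0 := by have := hp.2; intro h; linarith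
  have hp1C : (1 : ℂ) - (p : ℂ) ≠ 0 := by
    intro h
    apply hp1
    have : ((1 - p : ℝ) : ℂ) = 0 := by push_cast; exact h
    exact_mod_cast this
  -- row relations
  have hrow : ∀ i : Fin (N+1), (i:ℕ) < N → ∑ j, Bmat N p c i j * m j = 0 := by
    intro i hi
    set k := (i : ℕ) with hk
    have hrec := momI_rec hp hν k
    have hrecC : ((2:ℂ) ^ (k+1) - 1) * (momI ν (k+1) : ℂ)
        = (1 - (p:ℂ)) * ∑ j ∈ Finset.range (k+1), ((k+1).choose j : ℂ) * (momI ν j : ℂ) := by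
      have := congrArg (fun t : ℝ => (t : ℂ)) hrec
      push_cast at this
      convert this using 2
    set g : ℕ → ℂ := fun j =>
      (if j ≤ k then ((k+1).choose j : ℂ)
        else if j = k+1 then (1 - 2^(k+1))/(1-(p:ℂ)) else 0) * (momI ν j : ℂ) with hg
    have hterm : ∀ j : Fin (N+1), Bmat N p c i j * m j = g (j : ℕ) := by
      intro j
      simp only [Bmat, hg, hm, ← hk, if_pos hi]
    rw [Finset.sum_congr rfl fun j _ => hterm j]
    have hsub : ∑ j ∈ Finset.range (N+1), g j = ∑ j ∈ Finset.range (k+2), g j := by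
      refine (Finset.sum_subset ?_ ?_).symm
      · exact Finset.range_subset_range.mpr (by omega)
      · intro j _ hj
        rw [Finset.mem_range, not_lt] at hj
        simp only [hg]
        rw [if_neg (by omega), if_neg (by omega), zero_mul]
    rw [Fin.sum_univ_eq_sum_range g (N+1), hsub, Finset.sum_range_succ]
    have hlast : g (k+1) = (1 - 2^(k+1))/(1-(p:ℂ)) * (momI ν (k+1) : ℂ) := by
      simp only [hg]
      rw [if_neg (by omega : ¬ (k+1 ≤ k))]
      simp
    have hinit : ∑ j ∈ Finset.range (k+1), g j
        = ∑ j ∈ Finset.range (k+1), ((k+1).choose j : ℂ) * (momI ν j : ℂ) := by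
      refine Finset.sum_congr rfl fun j hj => ?_
      rw [Finset.mem_range] at hj
      simp only [hg]
      rw [if_pos (by omega)]
    have hM : (1 - 2^(k+1))/(1-(p:ℂ)) * ((momI ν (k+1) : ℝ) : ℂ)
        = -(∑ j ∈ Finset.range (k+1), (((k+1).choose j : ℕ) : ℂ) * ((momI ν j : ℝ) : ℂ)) := by
      rw [div_mul_eq_mul_div, div_eq_iff hp1C]
      linear_combination -hrecC
    rw [hlast, hinit, hM]
    ring
  have hdet := det_Bmat N p c m (by simp [hm, momI_zero]) hrow
  -- compute the real integral
  set T : ℝ := ∑ n ∈ Finset.range (N+1),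
    (N.choose n : ℝ) * ((N + n).choose n : ℝ) * (-1) ^ n * momI ν n with hT
  have hintT : (∫ x in Set.Icc (0 : ℝ) 1,
      ((-1 : ℝ) ^ N / Real.sqrt (2 * N + 1)) *
        ∑ n ∈ Finset.range (N + 1),
          (N.choose n : ℝ) * ((N + n).choose n : ℝ) * (-x) ^ n ∂μ)
      = ((-1 : ℝ) ^ N / Real.sqrt (2 * N + 1)) * T := by
    have hres : μ.restrict (Set.Icc (0:ℝ) 1) = μ := by
      apply Measure.restrict_eq_self_of_ae_mem
      rw [hμeq]
      refine (MeasureTheory.ae_map_iff measurable_binExpand.aemeasurable measurableSet_Icc).mpr ?_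
      exact Filter.Eventually.of_forall binExpand_mem_Icc
    have hcont : Continuous fun x : ℝ => ((-1 : ℝ) ^ N / Real.sqrt (2 * N + 1)) *
        ∑ n ∈ Finset.range (N + 1),
          (N.choose n : ℝ) * ((N + n).choose n : ℝ) * (-x) ^ n := by fun_prop
    rw [hres, hμeq, integral_map measurable_binExpand.aemeasurable hcont.aestronglyMeasurable,
      integral_const_mul]
    congr 1
    have hptwise : ∀ y : ℕ → Bool,
        (∑ n ∈ Finset.range (N+1), (N.choose n : ℝ) * ((N + n).choose n : ℝ) * (-binExpand y) ^ n)
        = ∑ n ∈ Finset.range (N+1),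
            ((N.choose n : ℝ) * ((N + n).choose n : ℝ) * (-1) ^ n) * (binExpand y) ^ n := by
      intro y
      refine Finset.sum_congr rfl fun n _ => ?_
      rw [neg_pow]
      ring
    rw [integral_congr_ae (Filter.Eventually.of_forall hptwise)]
    rw [integral_finset_sum _ (fun n _ => ((integrable_pow_binExpand n).const_mul _))]
    refine Finset.sum_congr rfl fun n _ => ?_
    rw [integral_const_mul]
    unfold momI
    ring
  -- relate T to the complex sum
  have hS : ((T : ℝ) : ℂ) = ∑ j, c j * m j := by
    have : (∑ j, c j * m j)
        = ∑ n ∈ Finset.range (N+1), ((-1:ℂ)^n * (N.choose n : ℂ) * ((N + n).choose n : ℂ)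
            * ((momI ν n : ℝ) : ℂ)) :=
      Fin.sum_univ_eq_sum_range
        (fun n => (-1:ℂ)^n * (N.choose n : ℂ) * ((N + n).choose n : ℂ) * ((momI ν n : ℝ) : ℂ))
        (N+1)
    rw [this, hT]
    push_cast
    refine Finset.sum_congr rfl fun n _ => ?_
    ring
  -- nonvanishing facts
  have hsqrtpos : (0:ℝ) < Real.sqrt (2 * N + 1) := Real.sqrt_pos.mpr (by positivity)
  have hsqrtC : ((Real.sqrt (2 * N + 1) : ℝ) : ℂ) ≠ 0 :=
    Complex.ofReal_ne_zero.mpr (ne_of_gt hsqrtpos)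
  have hprodne : (∏ n ∈ Finset.range N, ((2 : ℂ) ^ (n + 1) - 1)) ≠ 0 := by
    refine Finset.prod_ne_zero_iff.mpr fun n _ => ?_
    have h2 : ((2:ℂ) ^ (n+1) - 1) = (((2:ℝ) ^ (n+1) - 1 : ℝ) : ℂ) := by push_cast; ring
    rw [h2]
    refine Complex.ofReal_ne_zero.mpr ?_
    have : (1:ℝ) < 2 ^ (n+1) := one_lt_pow₀ one_lt_two (Nat.succ_ne_zero n)
    linarith
  have h1pN : ((1:ℂ) - (p:ℂ))^N ≠ 0 := pow_ne_zero _ hp1C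
  -- product manipulation
  have hprodsplit : (∏ i ∈ Finset.range N, ((1 - 2^(i+1))/(1-(p:ℂ))))
      = ((-1:ℂ)^N * ∏ n ∈ Finset.range N, ((2 : ℂ) ^ (n + 1) - 1)) / (1-(p:ℂ))^N := by
    rw [Finset.prod_div_distrib, Finset.prod_const, Finset.card_range]
    congr 1
    rw [show (∏ i ∈ Finset.range N, ((1:ℂ) - 2^(i+1)))
        = ∏ i ∈ Finset.range N, ((-1) * ((2:ℂ)^(i+1) - 1)) from
      Finset.prod_congr rfl fun i _ => by ring]
    rw [Finset.prod_mul_distrib, Finset.prod_const, Finset.card_range]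
  have hpowp : ((p:ℂ) - 1)^N = (-1:ℂ)^N * (1-(p:ℂ))^N := by
    rw [show (p:ℂ) - 1 = -(1 - (p:ℂ)) from by ring, neg_pow]
  have hneg : ((-1:ℂ))^N * (-1)^N = 1 := by
    rw [← pow_add, ← two_mul, pow_mul]
    norm_num
  have h3 : ((-1:ℂ))^(N*3) = (-1)^N := by
    calc ((-1:ℂ))^(N*3) = ((-1)^N * (-1)^N) * (-1)^N := by ring
    _ = (-1)^N := by rw [hneg, one_mul]
  rw [hintT, hdet, hprodsplit, hpowp]
  push_cast [hS]
  field_simp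
  linear_combination (-(∑ j, c j * m j)) * hneg

/-- For `p ∈ (0,1)` and `N ≥ 1`, the Fourier coefficient of `μ_p` on the
normalized shifted Legendre polynomial
`P_N(x) = ((-1)^N / √(2N+1)) ∑_{n=0}^N C(N,n) C(N+n,n) (-x)^n` is
`∫_0^1 P_N(x) dμ_p(x) = ((p-1)^N / (√(2N+1) ∏_{n=1}^N (2^n-1))) det B_N(p; c_0, …, c_N)`
with `c_j = (-1)^j C(N,j) C(N+j,j)`. -/
theorem stmt14 (p : ℝ) (hp : p ∈ Set.Ioo (0 : ℝ) 1) (μ : Measure ℝ)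
    (hμ : IsBernoulliMeasure p μ) (N : ℕ) (hN : 1 ≤ N) :
    ((∫ x in Set.Icc (0 : ℝ) 1,
        ((-1 : ℝ) ^ N / Real.sqrt (2 * N + 1)) *
          ∑ n ∈ Finset.range (N + 1),
            (N.choose n : ℝ) * ((N + n).choose n : ℝ) * (-x) ^ n ∂μ : ℝ) : ℂ) =
      ((p : ℂ) - 1) ^ N /
          ((Real.sqrt (2 * N + 1) : ℂ) * ∏ n ∈ Finset.range N, ((2 : ℂ) ^ (n + 1) - 1)) *
        (Bmat N p fun j =>
          (-1) ^ (j : ℕ) * (N.choose (j : ℕ) : ℂ) * ((N + (j : ℕ)).choose (j : ℕ) : ℂ)).det :=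
  stmt14_aux p hp μ hμ N hN
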